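/- arXiv:1212.1980 — 4 statements merged into one kernel-verified Lean document; each statement's English description precedes it below -/
import Mathlib

section
/- Let K be a field, let g be a finite-dimensional nilpotent Lie algebra over K, and let λ be a linear functional on g. Then λ admits a polarization: there exists a Lie subalgebra p of g such that λ(⁅x,y⁆) = 0 for all x, y ∈ p, and p is maximal among all K-linear subspaces W of g satisfying λ(⁅x,y⁆) = 0 for all x, y ∈ W. -/
open Module

/-- The quotient map `L → L ⧸ I` as a morphism of Lie algebras. -/
def LieIdealQuotMk {K : Type*} [Field K] {L : Type*} [LieRing L] [LieAlgebra K L]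
    (I : LieIdeal K L) : L →ₗ⁅K⁆ L ⧸ I :=
  { (LieSubmodule.Quotient.mk' I).toLinearMap with
    map_lie' := fun {_ _} => rfl }

theorem polar_top {K : Type u} [Field K] (L : Type v) [LieRing L] [LieAlgebra K L]
    (lam : L →ₗ[K] K) (h : ∀ x y : L, lam ⁅x, y⁆ = 0) :
    ∃ p : LieSubalgebra K L,
      (∀ x ∈ p, ∀ y ∈ p, lam ⁅x, y⁆ = 0) ∧
      (∀ W : Submodule K L, (∀ x ∈ W, ∀ y ∈ W, lam ⁅x, y⁆ = 0) →
        p.toSubmodule ≤ W → W = p.toSubmodule) := by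
  refine ⟨⊤, fun x _ y _ => h x y, fun W _ hW => le_antisymm ?_ hW⟩
  rw [LieSubalgebra.top_toSubmodule]
  exact le_top

theorem polar_aux (K : Type u) [Field K] :
    ∀ (n : ℕ) (L : Type v) [LieRing L] [LieAlgebra K L] [FiniteDimensional K L]
      [LieRing.IsNilpotent L], finrank K L ≤ n → ∀ lam : L →ₗ[K] K,
    ∃ p : LieSubalgebra K L,
      (∀ x ∈ p, ∀ y ∈ p, lam ⁅x, y⁆ = 0) ∧
      (∀ W : Submodule K L, (∀ x ∈ W, ∀ y ∈ W, lam ⁅x, y⁆ = 0) →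
        p.toSubmodule ≤ W → W = p.toSubmodule) := by
  intro n
  induction n with
  | zero =>
    intro L _ _ _ _ hn lam
    have : Subsingleton L := finrank_zero_iff.mp (Nat.le_zero.mp hn)
    exact polar_top L lam (fun x y => by rw [Subsingleton.elim (⁅x, y⁆) 0, map_zero])
  | succ n ih =>
    intro L _ _ _ _ hn lam
    by_cases h0 : ∀ x y : L, lam ⁅x, y⁆ = 0
    · exact polar_top L lam h0
    push_neg at h0
    obtain ⟨x0, y0, hxy0⟩ := h0
    have hnt : Nontrivial L := ⟨⁅x0, y0⁆, 0, fun h => hxy0 (by rw [h, map_zero])⟩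
    by_cases hz : ∃ z : L, z ∈ LieAlgebra.center K L ∧ z ≠ 0 ∧ lam z = 0
    · -- Case A : quotient by a central element killed by lam
      obtain ⟨z, hzZ, hz0, hzlam⟩ := hz
      have hzc : ∀ x : L, ⁅x, z⁆ = 0 := (LieModule.mem_maxTrivSubmodule K L L z).mp hzZ
      set I : LieIdeal K L :=
        { Submodule.span K {z} with
          lie_mem := fun {x m} hm => by
            obtain ⟨c, rfl⟩ := Submodule.mem_span_singleton.mp hm
            rw [lie_smul, hzc x, smul_zero]
            exact Submodule.zero_mem _ } with hI
      have hIsub : I.toSubmodule = Submodule.span K {z} := rfl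
      set π := LieIdealQuotMk I with hπdef
      have hπs : Function.Surjective π := Quot.mk_surjective
      haveI : FiniteDimensional K (L ⧸ I) :=
        inferInstanceAs (FiniteDimensional K (L ⧸ I.toSubmodule))
      haveI : LieRing.IsNilpotent (L ⧸ I) := hπs.lieAlgebra_isNilpotent
      have hrk : finrank K (L ⧸ I) ≤ n := by
        have h1 := Submodule.finrank_quotient_add_finrank I.toSubmodule
        have h2 : finrank K I.toSubmodule = 1 := by
          rw [hIsub]; exact finrank_span_singleton hz0
        have : finrank K (L ⧸ I.toSubmodule) ≤ n := by omega
        exact this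
      have hIker : I.toSubmodule ≤ LinearMap.ker lam := by
        rw [hIsub, Submodule.span_le, Set.singleton_subset_iff]
        simpa using hzlam
      set lam' : (L ⧸ I) →ₗ[K] K := I.toSubmodule.liftQ lam hIker with hlam'def
      have hlam' : ∀ x : L, lam' (π x) = lam x := fun x => rfl
      obtain ⟨p', hp'iso, hp'max⟩ := ih (L ⧸ I) hrk lam'
      set p : LieSubalgebra K L :=
        { p'.toSubmodule.comap π.toLinearMap with
          lie_mem' := fun {x y} hx hy => by
            have hx' : π x ∈ p' := hx
            have hy' : π y ∈ p' := hy
            show π ⁅x, y⁆ ∈ p'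
            rw [π.map_lie]
            exact p'.lie_mem hx' hy' } with hp
      have hmem : ∀ x : L, x ∈ p ↔ π x ∈ p' := fun x => Iff.rfl
      have hker : ∀ x : L, π x = 0 → x ∈ p := fun x hx => by
        rw [hmem, hx]; exact p'.zero_mem
      refine ⟨p, ?_, ?_⟩
      · intro x hx y hy
        have : lam' (π ⁅x, y⁆) = 0 := by
          rw [π.map_lie]
          exact hp'iso _ ((hmem x).mp hx) _ ((hmem y).mp hy)
        rwa [hlam'] at this
      · intro W hWiso hpW
        set W' := W.map π.toLinearMap with hW'def
        have hsub : p'.toSubmodule ≤ W' := by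
          intro a ha
          obtain ⟨x, rfl⟩ := hπs a
          exact ⟨x, hpW ((hmem x).mpr ha), rfl⟩
        have hWiso' : ∀ x ∈ W', ∀ y ∈ W', lam' ⁅x, y⁆ = 0 := by
          rintro _ ⟨w, hw, rfl⟩ _ ⟨w', hw', rfl⟩
          have : (⁅π w, π w'⁆ : L ⧸ I) = π ⁅w, w'⁆ := (π.map_lie _ _).symm
          rw [show (π.toLinearMap w : L ⧸ I) = π w from rfl,
            show (π.toLinearMap w' : L ⧸ I) = π w' from rfl, this, hlam']
          exact hWiso w hw w' hw'
        have hW' : W' = p'.toSubmodule := hp'max W' hWiso' hsub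
        have hkerW : LinearMap.ker π.toLinearMap ≤ W := fun x hx =>
          hpW (hker x (by simpa using hx))
        calc W = W ⊔ LinearMap.ker π.toLinearMap := (sup_eq_left.mpr hkerW).symm
          _ = (W.map π.toLinearMap).comap π.toLinearMap := (Submodule.comap_map_eq _ _).symm
          _ = p'.toSubmodule.comap π.toLinearMap := by rw [← hW'def, hW']
          _ = p.toSubmodule := rfl
    · -- Case B : lam is injective on the center
      push_neg at hz
      have hz' : ∀ z : L, z ∈ LieAlgebra.center K L → lam z = 0 → z = 0 := by
        intro z hzZ hzlam
        by_contra h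
        exact (hz z hzZ h) hzlam
      -- find u ∉ center with ⁅u, x⁆ ∈ center for all x
      have hct : LieAlgebra.center K L ≠ ⊤ := by
        intro h
        apply hxy0
        have : y0 ∈ LieAlgebra.center K L := h ▸ LieSubmodule.mem_top _
        rw [(LieModule.mem_maxTrivSubmodule K L L y0).mp this x0, map_zero]
      set Z := LieAlgebra.center K L with hZdef
      set π := LieIdealQuotMk Z with hπdef
      have hπs : Function.Surjective π := Quot.mk_surjective
      haveI : FiniteDimensional K (L ⧸ Z) :=
        inferInstanceAs (FiniteDimensional K (L ⧸ Z.toSubmodule))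
      haveI : LieRing.IsNilpotent (L ⧸ Z) := hπs.lieAlgebra_isNilpotent
      haveI : Nontrivial (L ⧸ Z) := by
        refine (Submodule.Quotient.nontrivial_iff (p := Z.toSubmodule)).mpr (lt_top_iff_ne_top.mp ?_)
        rw [lt_top_iff_ne_top]
        intro h
        exact hct (by rwa [← LieSubmodule.toSubmodule_inj, LieSubmodule.top_toSubmodule])
      haveI := LieAlgebra.non_trivial_center_of_isNilpotent (R := K) (L := L ⧸ Z)
      obtain ⟨ub, hub⟩ := exists_ne (0 : LieAlgebra.center K (L ⧸ Z))
      obtain ⟨u, hu⟩ := hπs (ub : L ⧸ Z)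
      have hubar0 : (ub : L ⧸ Z) ≠ 0 := fun h => hub (by ext; exact h)
      have hunc : u ∉ Z := by
        intro h
        exact hubar0 (by rw [← hu]; exact (LieSubmodule.Quotient.mk_eq_zero').mpr h)
      have hbr : ∀ x : L, ⁅u, x⁆ ∈ Z := by
        intro x
        have h1 : π ⁅u, x⁆ = 0 := by
          rw [π.map_lie, hu]
          have := (LieModule.mem_maxTrivSubmodule K (L ⧸ Z) (L ⧸ Z) (ub : L ⧸ Z)).mp ub.2
          rw [← lie_skew, this (π x), neg_zero]
        exact (LieSubmodule.Quotient.mk_eq_zero').mp h1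
      set φ : L →ₗ[K] K := lam ∘ₗ (LieAlgebra.ad K L u) with hφdef
      have hφ : ∀ x : L, φ x = lam ⁅u, x⁆ := fun x => by
        rw [hφdef]; simp [LieAlgebra.ad_apply]
      have hφ0 : φ ≠ 0 := by
        intro h
        apply hunc
        rw [hZdef]
        rw [LieModule.mem_maxTrivSubmodule]
        intro x
        have h1 : ⁅u, x⁆ = 0 := by
          apply hz' _ (hbr x)
          rw [← hφ x, h]; rfl
        rw [← lie_skew, h1, neg_zero]
      -- the codimension-one ideal
      have hbracket : ∀ x y : L, ⁅x, y⁆ ∈ LinearMap.ker φ := by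
        intro x y
        rw [LinearMap.mem_ker, hφ, leibniz_lie u x y, map_add]
        have h1 : ⁅(⁅u, x⁆), y⁆ = 0 := by
          rw [← lie_skew, (LieModule.mem_maxTrivSubmodule K L L _).mp (hbr x) y, neg_zero]
        have h2 : ⁅x, ⁅u, y⁆⁆ = 0 := (LieModule.mem_maxTrivSubmodule K L L _).mp (hbr y) x
        rw [h1, h2]
        simp
      set S : LieSubalgebra K L :=
        { LinearMap.ker φ with
          lie_mem' := fun {x y} _ _ => hbracket x y } with hS
      have hSmem : ∀ x : L, x ∈ S ↔ φ x = 0 := fun x => LinearMap.mem_ker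
      haveI : FiniteDimensional K S :=
        inferInstanceAs (FiniteDimensional K (LinearMap.ker φ))
      have hSincl_inj : Function.Injective S.incl := fun a b h => Subtype.ext h
      haveI : LieRing.IsNilpotent S := hSincl_inj.lieAlgebra_isNilpotent
      have hrkS : finrank K S ≤ n := by
        have h1 := LinearMap.finrank_range_add_finrank_ker φ
        have h2 : finrank K (LinearMap.range φ) ≠ 0 := by
          intro h
          exact hφ0 (LinearMap.range_eq_bot.mp (Submodule.finrank_eq_zero.mp h))
        have h3 : finrank K (LinearMap.ker φ) ≤ n := by omega
        exact h3
      set lamS : S →ₗ[K] K := lam ∘ₗ S.incl.toLinearMap with hlamSdef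
      have hlamS : ∀ a : S, lamS a = lam (a : L) := fun a => rfl
      have hlamSbr : ∀ a b : S, lamS ⁅a, b⁆ = lam ⁅(a : L), (b : L)⁆ := fun a b => rfl
      obtain ⟨p', hp'iso, hp'max⟩ := ih S hrkS lamS
      set pSub : Submodule K L := p'.toSubmodule.map S.toSubmodule.subtype with hpSubdef
      have hpSubmem : ∀ x : L, x ∈ pSub ↔ ∃ a : S, a ∈ p' ∧ (a : L) = x := by
        intro x
        constructor
        · rintro ⟨a, ha, rfl⟩; exact ⟨a, ha, rfl⟩
        · rintro ⟨a, ha, rfl⟩; exact ⟨a, ha, rfl⟩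
      set p : LieSubalgebra K L :=
        { pSub with
          lie_mem' := fun {x y} hx hy => by
            obtain ⟨a, ha, rfl⟩ := (hpSubmem x).mp hx
            obtain ⟨b, hb, rfl⟩ := (hpSubmem y).mp hy
            exact (hpSubmem _).mpr ⟨⁅a, b⁆, p'.lie_mem ha hb, rfl⟩ } with hpdef
      have hpmem : ∀ x : L, x ∈ p ↔ x ∈ pSub := fun x => Iff.rfl
      have hpsub : p.toSubmodule = pSub := rfl
      -- u belongs to p
      have huS : u ∈ S := (hSmem u).mpr (by rw [hφ, lie_self, map_zero])
      set uS : S := ⟨u, huS⟩ with huSdef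
      have keyr : ∀ a : S, lamS ⁅a, uS⁆ = 0 := by
        intro a
        rw [hlamSbr]
        have : φ (a : L) = 0 := (hSmem _).mp a.2
        rw [hφ] at this
        show lam ⁅(a : L), u⁆ = 0
        rw [← lie_skew, map_neg, this, neg_zero]
      have keyl : ∀ a : S, lamS ⁅uS, a⁆ = 0 := by
        intro a
        rw [hlamSbr]
        have : φ (a : L) = 0 := (hSmem _).mp a.2
        rw [hφ] at this
        exact this
      have huSp' : uS ∈ p' := by
        set W' : Submodule K S := p'.toSubmodule ⊔ (K ∙ uS) with hW'def
        have hiso' : ∀ x ∈ W', ∀ y ∈ W', lamS ⁅x, y⁆ = 0 := by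
          intro x hx y hy
          rw [hW'def] at hx hy
          obtain ⟨a, ha, b, hb, rfl⟩ := Submodule.mem_sup.mp hx
          obtain ⟨a', ha', b', hb', rfl⟩ := Submodule.mem_sup.mp hy
          obtain ⟨c, rfl⟩ := Submodule.mem_span_singleton.mp hb
          obtain ⟨c', rfl⟩ := Submodule.mem_span_singleton.mp hb'
          have h1 : lamS ⁅a, a'⁆ = 0 := hp'iso a ha a' ha'
          simp only [lie_add, add_lie, lie_smul, smul_lie, map_add, map_smul,
            h1, keyr, keyl, smul_zero, add_zero, zero_add]
        have := hp'max W' hiso' le_sup_left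
        have huW' : uS ∈ W' := by
          rw [hW'def]
          exact Submodule.mem_sup_right (Submodule.mem_span_singleton_self uS)
        rwa [this] at huW'
      have hup : u ∈ p := (hpmem u).mpr ((hpSubmem u).mpr ⟨uS, huSp', rfl⟩)
      refine ⟨p, ?_, ?_⟩
      · intro x hx y hy
        obtain ⟨a, ha, rfl⟩ := (hpSubmem x).mp ((hpmem x).mp hx)
        obtain ⟨b, hb, rfl⟩ := (hpSubmem y).mp ((hpmem y).mp hy)
        rw [← hlamSbr]
        exact hp'iso a ha b hb
      · intro W hWiso hpW
        have hWS : W ≤ S.toSubmodule := by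
          intro w hw
          show φ w = 0
          rw [hφ]
          exact hWiso u (hpW hup) w hw
        set W' : Submodule K S := W.comap S.toSubmodule.subtype with hW'def
        have hsub : p'.toSubmodule ≤ W' := by
          intro a ha
          show (a : L) ∈ W
          exact hpW ((hpSubmem _).mpr ⟨a, ha, rfl⟩)
        have hiso' : ∀ x ∈ W', ∀ y ∈ W', lamS ⁅x, y⁆ = 0 := by
          intro x hx y hy
          rw [hlamSbr]
          exact hWiso _ hx _ hy
        have hW'eq : W' = p'.toSubmodule := hp'max W' hiso' hsub
        have : W'.map S.toSubmodule.subtype = W := by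
          rw [Submodule.map_comap_eq, Submodule.range_subtype]
          exact inf_eq_right.mpr hWS
        rw [← this, hW'eq, hpsub, hpSubdef]

/-- Any linear functional `λ` on a finite-dimensional nilpotent Lie algebra `g` over a field `K`
admits a polarization: a Lie subalgebra `p` that is isotropic for the form
`B_λ(x, y) = λ ⁅x, y⁆` and is maximal among all `K`-linear subspaces on which `B_λ` vanishes. -/
theorem exists_polarization
    (K : Type*) [Field K] (L : Type*) [LieRing L] [LieAlgebra K L]
    [FiniteDimensional K L] [LieRing.IsNilpotent L]
    (lam : L →ₗ[K] K) :
    ∃ p : LieSubalgebra K L,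
      (∀ x ∈ p, ∀ y ∈ p, lam ⁅x, y⁆ = 0) ∧
      (∀ W : Submodule K L, (∀ x ∈ W, ∀ y ∈ W, lam ⁅x, y⁆ = 0) →
        p.toSubmodule ≤ W → W = p.toSubmodule) := by
  exact polar_aux K (finrank K L) L le_rfl lam
end

section
/- Let g be a finite-dimensional nilpotent Lie algebra over a field K and h any Lie subalgebra of g. Then there exists a finite chain of Lie subalgebras g = g₀ ⊇ g₁ ⊇ … ⊇ g_k = h such that for each i, g_{i+1} is a Lie ideal of g_i of codimension one (dim g_{i+1} = dim g_i − 1). -/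
open Module

section Aux

variable {K : Type*} [Field K] {L : Type*} [LieRing L] [LieAlgebra K L]

/-- In a nilpotent Lie algebra, a proper subalgebra is strictly contained in its normalizer. -/
lemma aux_exists_mem_normalizer [LieRing.IsNilpotent L]
    (h : LieSubalgebra K L) (hne : h ≠ ⊤) :
    ∃ x : L, x ∈ h.normalizer ∧ x ∉ h := by
  obtain ⟨k, hk⟩ := (LieModule.isNilpotent_iff K L L).mp inferInstance
  let P : ℕ → Prop := fun n => ∀ x ∈ LieModule.lowerCentralSeries K L L n, x ∈ h
  have hPk : P k := by intro x hx; rw [hk] at hx; simp only [LieSubmodule.mem_bot] at hx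
                       exact hx ▸ h.zero_mem
  have hP0 : ¬ P 0 := by
    intro hp
    apply hne
    ext x
    simp only [LieSubalgebra.mem_top, iff_true]
    exact hp x (by simp)
  have hex : ∃ n, P n := ⟨k, hPk⟩
  classical
  have hn : P (Nat.find hex) := Nat.find_spec hex
  have hnpos : Nat.find hex ≠ 0 := fun h0 => hP0 (h0 ▸ hn)
  obtain ⟨m, hm'⟩ : ∃ m, Nat.find hex = m + 1 :=
    ⟨Nat.find hex - 1, (Nat.succ_pred_eq_of_pos (Nat.pos_of_ne_zero hnpos)).symm⟩
  have hm : ¬ P m := Nat.find_min hex (by omega)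
  simp only [P] at hm; push_neg at hm
  obtain ⟨x, hx, hxh⟩ := hm
  refine ⟨x, ?_, hxh⟩
  rw [LieSubalgebra.mem_normalizer_iff']
  intro y hy
  apply hn
  rw [hm', LieModule.lowerCentralSeries_succ]
  exact LieSubmodule.lie_mem_lie (LieSubmodule.mem_top y) hx

variable (K) in
/-- Extend a subalgebra by an element of its normalizer. -/
def auxExt {x : L} (h : LieSubalgebra K L) (hx : x ∈ h.normalizer) : LieSubalgebra K L :=
  { (K ∙ x) ⊔ (h : Submodule K L) with
    lie_mem' := fun {a b} ha hb => LieSubalgebra.lie_mem_sup_of_mem_normalizer hx ha hb }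

lemma auxExt_coe {x : L} (h : LieSubalgebra K L) (hx : x ∈ h.normalizer) :
    (auxExt K h hx : Submodule K L) = (K ∙ x) ⊔ (h : Submodule K L) := rfl

lemma le_auxExt {x : L} (h : LieSubalgebra K L) (hx : x ∈ h.normalizer) :
    h ≤ auxExt K h hx := by intro y hy; exact Submodule.mem_sup_right hy

lemma auxExt_ideal {x : L} (h : LieSubalgebra K L) (hx : x ∈ h.normalizer) :
    ∀ a ∈ auxExt K h hx, ∀ y ∈ h, ⁅a, y⁆ ∈ h := by
  intro a ha y hy
  obtain ⟨u, hu, v, hv, rfl⟩ := Submodule.mem_sup.mp ha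
  obtain ⟨c, rfl⟩ := Submodule.mem_span_singleton.mp hu
  rw [add_lie, smul_lie]
  exact h.add_mem (h.smul_mem c (LieSubalgebra.ideal_in_normalizer hx hy))
    (h.lie_mem hv hy)

lemma auxExt_finrank [FiniteDimensional K L] {x : L} (h : LieSubalgebra K L)
    (hx : x ∈ h.normalizer) (hxh : x ∉ h) :
    finrank K (auxExt K h hx) = finrank K h + 1 := by
  have hx0 : x ≠ 0 := fun h0 => hxh (h0 ▸ h.zero_mem)
  have hinf : (K ∙ x) ⊓ (h : Submodule K L) = ⊥ := by
    rw [Submodule.eq_bot_iff]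
    rintro y ⟨h1, h2⟩
    obtain ⟨c, rfl⟩ := Submodule.mem_span_singleton.mp h1
    rcases eq_or_ne c 0 with rfl | hc
    · simp
    · have : x ∈ h := by
        have := h.smul_mem c⁻¹ h2
        rwa [inv_smul_smul₀ hc] at this
      exact (hxh this).elim
  have key := Submodule.finrank_sup_add_finrank_inf_eq (K ∙ x) (h : Submodule K L)
  rw [hinf, finrank_bot, finrank_span_singleton hx0] at key
  show finrank K (auxExt K h hx : Submodule K L) = finrank K (h : Submodule K L) + 1
  rw [auxExt_coe]
  omega

lemma aux_chain [FiniteDimensional K L] [LieRing.IsNilpotent L] :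
    ∀ (d : ℕ) (h : LieSubalgebra K L), finrank K L ≤ finrank K h + d →
    ∃ (k : ℕ) (c : Fin (k + 1) → LieSubalgebra K L),
      c 0 = ⊤ ∧ c (Fin.last k) = h ∧
      ∀ i : Fin k,
        c i.succ ≤ c i.castSucc ∧
        (∀ x ∈ c i.castSucc, ∀ y ∈ c i.succ, ⁅x, y⁆ ∈ c i.succ) ∧
        Module.finrank K (c i.succ) + 1 = Module.finrank K (c i.castSucc) := by
  intro d
  induction d with
  | zero =>
    intro h hle
    have htop : h = ⊤ := by
      rw [← LieSubalgebra.toSubmodule_inj, LieSubalgebra.top_toSubmodule]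
      apply Submodule.eq_top_of_finrank_eq
      have h1 := Submodule.finrank_le (h : Submodule K L)
      have h2 : finrank K (h : Submodule K L) = finrank K h := rfl
      omega
    exact ⟨0, fun _ => h, by rw [htop], rfl, fun i => i.elim0⟩
  | succ d ih =>
    intro h hle
    by_cases htop : h = ⊤
    · exact ⟨0, fun _ => h, by rw [htop], rfl, fun i => i.elim0⟩
    · obtain ⟨x, hx, hxh⟩ := aux_exists_mem_normalizer h htop
      have hrk := auxExt_finrank h hx hxh
      obtain ⟨k, c, hc0, hcl, hci⟩ := ih (auxExt K h hx) (by omega)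
      refine ⟨k + 1, Fin.snoc c h, ?_, ?_, ?_⟩
      · have : (0 : Fin (k + 2)) = Fin.castSucc 0 := rfl
        rw [this, Fin.snoc_castSucc]
        exact hc0
      · rw [Fin.snoc_last]
      · intro i
        refine i.lastCases ?_ ?_
        · rw [Fin.succ_last, Fin.snoc_last, Fin.snoc_castSucc, hcl]
          exact ⟨le_auxExt h hx, auxExt_ideal h hx, by omega⟩
        · intro j
          rw [Fin.succ_castSucc, Fin.snoc_castSucc, Fin.snoc_castSucc]
          exact hci j

end Aux

/-- For any Lie subalgebra `h` of a finite-dimensional nilpotent Lie algebra `g` there is a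
chain of Lie subalgebras `g = g₀ ⊇ g₁ ⊇ … ⊇ g_k = h` in which each term is an ideal of
codimension one in the preceding one. -/
theorem exists_chain_of_codim_one_ideals
    (K : Type*) [Field K] (L : Type*) [LieRing L] [LieAlgebra K L]
    [FiniteDimensional K L] [LieRing.IsNilpotent L]
    (h : LieSubalgebra K L) :
    ∃ (k : ℕ) (c : Fin (k + 1) → LieSubalgebra K L),
      c 0 = ⊤ ∧ c (Fin.last k) = h ∧
      ∀ i : Fin k,
        c i.succ ≤ c i.castSucc ∧
        (∀ x ∈ c i.castSucc, ∀ y ∈ c i.succ, ⁅x, y⁆ ∈ c i.succ) ∧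
        Module.finrank K (c i.succ) + 1 = Module.finrank K (c i.castSucc) := by
  exact aux_chain (finrank K L) h (by omega)
end

section
/- Let K be a field, V a finite-dimensional K-vector space, and B an alternating bilinear form on V. Let V₀ ⊆ V be a subspace of codimension one such that the radical of B, namely {v ∈ V : B(v, w) = 0 for all w ∈ V}, is contained in V₀. Then there exist elements u ∈ V \ V₀ and v ∈ V₀ with B(v, w) = 0 for all w ∈ V₀ (i.e. v lies in the radical of the restriction of B to V₀) such that B(u, v) = 1. -/
/-- Let `B` be an alternating bilinear form on a finite-dimensional vector space `V` and let
`V₀ ⊆ V` be a hyperplane containing the radical of `B`. Then there exist `u ∈ V \ V₀` and `v`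
in the radical of the restriction of `B` to `V₀` with `B u v = 1`. -/
theorem exists_pair_hyperplane_radical
    (K : Type*) [Field K] (V : Type*) [AddCommGroup V] [Module K V]
    [FiniteDimensional K V]
    (B : V →ₗ[K] V →ₗ[K] K) (halt : ∀ x : V, B x x = 0)
    (V0 : Submodule K V)
    (hcodim : Module.finrank K V0 + 1 = Module.finrank K V)
    (hrad : ∀ v : V, (∀ w : V, B v w = 0) → v ∈ V0) :
    ∃ u v : V, u ∉ V0 ∧ v ∈ V0 ∧ (∀ w ∈ V0, B v w = 0) ∧ B u v = 1 := by
  classical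
  have hskew : ∀ x y : V, B x y = - B y x := by
    intro x y
    have h := halt (x + y)
    simp only [map_add, LinearMap.add_apply, halt x, halt y] at h
    linear_combination h
  obtain ⟨u, hu⟩ : ∃ u : V, u ∉ V0 := by
    by_contra h
    push_neg at h
    have : V0 = ⊤ := Submodule.eq_top_iff'.mpr h
    rw [this, finrank_top] at hcodim
    omega
  -- V0 ⊔ span u = ⊤
  have hsup : V0 ⊔ Submodule.span K {u} = ⊤ := by
    apply Submodule.eq_top_of_finrank_eq
    have hlt : V0 < V0 ⊔ Submodule.span K {u} := by
      refine lt_of_le_of_ne le_sup_left ?_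
      intro heq
      have hmem : u ∈ V0 ⊔ Submodule.span K {u} :=
        Submodule.mem_sup_right (Submodule.mem_span_singleton_self u)
      rw [← heq] at hmem
      exact hu hmem
    have h1 : Module.finrank K V0 < Module.finrank K ↥(V0 ⊔ Submodule.span K {u}) :=
      Submodule.finrank_lt_finrank_of_lt hlt
    have h2 : Module.finrank K ↥(V0 ⊔ Submodule.span K {u}) ≤ Module.finrank K V :=
      Submodule.finrank_le _
    omega
  have hdecomp : ∀ w : V, ∃ (a : V) (c : K), a ∈ V0 ∧ w = a + c • u := by
    intro w
    have : w ∈ V0 ⊔ Submodule.span K {u} := hsup ▸ Submodule.mem_top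
    obtain ⟨a, ha, b, hb, rfl⟩ := Submodule.mem_sup.mp this
    obtain ⟨c, rfl⟩ := Submodule.mem_span_singleton.mp hb
    exact ⟨a, c, ha, rfl⟩
  by_cases hex : ∃ v : V, v ∈ V0 ∧ (∀ w ∈ V0, B v w = 0) ∧ B u v ≠ 0
  · obtain ⟨v, hvV, hvrad, hc⟩ := hex
    refine ⟨u, (B u v)⁻¹ • v, hu, Submodule.smul_mem _ _ hvV, ?_, ?_⟩
    · intro w hw
      rw [map_smul, LinearMap.smul_apply, hvrad w hw, smul_zero]
    · rw [map_smul, smul_eq_mul, inv_mul_cancel₀ hc]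
  · exfalso
    push_neg at hex
    -- radical of B|V0 is contained in radical of B
    have hradW : ∀ v : V, v ∈ V0 → (∀ w ∈ V0, B v w = 0) → ∀ w : V, B v w = 0 := by
      intro v hv hvrad w
      obtain ⟨a, c, ha, rfl⟩ := hdecomp w
      have h1 : B v u = 0 := by
        rw [hskew v u, hex v hv hvrad, neg_zero]
      simp [hvrad a ha, h1]
    -- the dual argument
    set h : V0 →ₗ[K] Module.Dual K V0 := (B.domRestrict V0).compl₂ V0.subtype with hh
    set φ : Module.Dual K V0 := (B u).domRestrict V0 with hφdef
    have hsub : LinearMap.range h ≤ (LinearMap.ker h).dualAnnihilator := by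
      rintro _ ⟨v, rfl⟩
      rw [Submodule.mem_dualAnnihilator]
      intro k hk
      have hk' : ∀ w : V0, B k w = 0 := fun w => by
        have := LinearMap.congr_fun (LinearMap.mem_ker.mp hk) w
        simpa [hh] using this
      show B v k = 0
      rw [hskew (v : V) (k : V), hk' v, neg_zero]
    have hrange : LinearMap.range h = (LinearMap.ker h).dualAnnihilator := by
      apply Submodule.eq_of_le_of_finrank_le hsub
      have e1 : Module.finrank K (LinearMap.range h) + Module.finrank K (LinearMap.ker h)
          = Module.finrank K V0 := LinearMap.finrank_range_add_finrank_ker h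
      have e2 : Module.finrank K ((LinearMap.ker h).dualAnnihilator)
          = Module.finrank K (V0 ⧸ LinearMap.ker h) :=
        (LinearEquiv.finrank_eq (Subspace.quotEquivAnnihilator (LinearMap.ker h))).symm
      have e3 : Module.finrank K (V0 ⧸ LinearMap.ker h) + Module.finrank K (LinearMap.ker h)
          = Module.finrank K V0 := Submodule.finrank_quotient_add_finrank _
      omega
    have hφ : φ ∈ LinearMap.range h := by
      rw [hrange, Submodule.mem_dualAnnihilator]
      intro k hk
      have hk' : ∀ w : V0, B k w = 0 := fun w => by
        have := LinearMap.congr_fun (LinearMap.mem_ker.mp hk) w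
        simpa [hh] using this
      have : ∀ w : V, B (k : V) w = 0 :=
        hradW k k.2 (fun w hw => hk' ⟨w, hw⟩)
      show B u k = 0
      rw [hskew u k, this u, neg_zero]
    obtain ⟨w0, hw0⟩ := hφ
    -- u - w0 is in the radical of B
    have hdiff : ∀ w : V, B (u - (w0 : V)) w = 0 := by
      have hW : ∀ w : V, w ∈ V0 → B (u - (w0 : V)) w = 0 := by
        intro w hw
        have := LinearMap.congr_fun hw0 ⟨w, hw⟩
        simp only [hh, hφdef, LinearMap.compl₂_apply, LinearMap.domRestrict_apply,
          Submodule.subtype_apply] at this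
        simp [map_sub, this]
      intro w
      obtain ⟨a, c, ha, rfl⟩ := hdecomp w
      have hself : B (u - (w0 : V)) (u - (w0 : V)) = 0 := halt _
      have hw0' : B (u - (w0 : V)) (w0 : V) = 0 := hW _ w0.2
      have hBu : B (u - (w0 : V)) u = 0 := by
        have : B (u - (w0 : V)) u - B (u - (w0 : V)) (w0 : V) = 0 := by
          simpa [map_sub] using hself
        rw [hw0'] at this; linear_combination this
      simp only [map_add, map_smul, hW a ha, hBu, smul_zero, add_zero]
    exact hu (by simpa using sub_add_cancel u (w0 : V) ▸
      Submodule.add_mem V0 (hrad _ hdiff) w0.2)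
end

section
/- Let g be a finite-dimensional nilpotent Lie algebra over a field K, λ a linear functional on g, and z a central element of g with λ(z) ≠ 0. Suppose y ∈ g and α : g → K is a nonzero K-linear map such that ⁅u, y⁆ = α(u)·z for all u ∈ g, and let g₀ = ker α (a codimension-one Lie subalgebra of g). If p₀ ⊆ g₀ is a Lie subalgebra of g₀ that is a maximal isotropic subspace of g₀ for the form (x, w) ↦ λ(⁅x, w⁆) restricted to g₀, then p₀ is a maximal isotropic subspace of g for B_λ(x, w) = λ(⁅x, w⁆); that is, p₀ is a polarization of λ in g. -/
/-- Key induction step in the construction of polarizations: let `λ` be a linear functional on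
a finite-dimensional nilpotent Lie algebra `g`, `z` a central element with `λ z ≠ 0`, and
`y`, `α ≠ 0` with `⁅u, y⁆ = α u • z` for all `u`; put `g₀ = ker α`. If a Lie subalgebra
`p₀ ⊆ g₀` is a maximal isotropic subspace of `g₀` for `B_λ`, then `p₀` is a maximal isotropic
subspace of `g` for `B_λ`, i.e. a polarization of `λ` in `g`. -/
theorem polarization_of_max_isotropic_in_kernel
    (K : Type*) [Field K] (L : Type*) [LieRing L] [LieAlgebra K L]
    [FiniteDimensional K L] [LieRing.IsNilpotent L]
    (lam : L →ₗ[K] K)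
    (z : L) (hcentral : ∀ x : L, ⁅x, z⁆ = 0) (hz : lam z ≠ 0)
    (y : L) (α : L →ₗ[K] K) (hα : α ≠ 0)
    (hy : ∀ u : L, ⁅u, y⁆ = α u • z)
    (p0 : LieSubalgebra K L) (hp0 : p0.toSubmodule ≤ LinearMap.ker α)
    (hiso : ∀ x ∈ p0, ∀ w ∈ p0, lam ⁅x, w⁆ = 0)
    (hmax : ∀ W : Submodule K L, W ≤ LinearMap.ker α →
      (∀ x ∈ W, ∀ w ∈ W, lam ⁅x, w⁆ = 0) → p0.toSubmodule ≤ W → W = p0.toSubmodule) :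
    (∀ x ∈ p0, ∀ w ∈ p0, lam ⁅x, w⁆ = 0) ∧
    ∀ W : Submodule K L, (∀ x ∈ W, ∀ w ∈ W, lam ⁅x, w⁆ = 0) →
      p0.toSubmodule ≤ W → W = p0.toSubmodule := by

  have hz0 : z ≠ 0 := fun h => hz (by simp [h])
  have hαy : α y = 0 := by
    have h := hy y
    rw [lie_self] at h
    rcases smul_eq_zero.mp h.symm with h | h
    · exact h
    · exact absurd h hz0
  -- y ∈ p0
  have hyp0 : y ∈ p0 := by
    have hsub : p0.toSubmodule ⊔ (K ∙ y) ≤ LinearMap.ker α := by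
      refine sup_le hp0 ?_
      rw [Submodule.span_singleton_le_iff_mem]
      exact LinearMap.mem_ker.mpr hαy
    have hisoW : ∀ x ∈ p0.toSubmodule ⊔ (K ∙ y), ∀ w ∈ p0.toSubmodule ⊔ (K ∙ y),
        lam ⁅x, w⁆ = 0 := by
      intro x hx w hw
      obtain ⟨a, ha, b, hb, rfl⟩ := Submodule.mem_sup.mp hx
      obtain ⟨c, hc, d, hd, rfl⟩ := Submodule.mem_sup.mp hw
      obtain ⟨s, rfl⟩ := Submodule.mem_span_singleton.mp hb
      obtain ⟨t, rfl⟩ := Submodule.mem_span_singleton.mp hd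
      have hαa : α a = 0 := hp0 ha
      have hαc : α c = 0 := hp0 hc
      have h1 : lam ⁅a, c⁆ = 0 := hiso a ha c hc
      have h2 : ⁅y, c⁆ = -(α c • z) := by rw [← lie_skew, hy c]
      simp [lie_add, add_lie, lie_smul, smul_lie, hy, h1, h2, hαa, hαc, hαy]
    have heq := hmax _ hsub hisoW le_sup_left
    have : y ∈ p0.toSubmodule ⊔ (K ∙ y) :=
      Submodule.mem_sup_right (Submodule.mem_span_singleton_self y)
    rw [heq] at this
    exact this
  refine ⟨hiso, fun W hWiso hle => ?_⟩
  refine hmax W ?_ hWiso hle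
  intro w hw
  have h := hWiso w hw y (hle hyp0)
  rw [hy w, map_smul, smul_eq_mul] at h
  exact LinearMap.mem_ker.mpr ((mul_eq_zero.mp h).resolve_right hz)
end
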